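/- Let (F,G) be a WZ pair: F(n+1,k) - F(n,k) = G(n,k+1) - G(n,k) for all n,k ≥ 0. Suppose the series Σ_{n=0}^∞ G(n,0) and Σ_{n=1}^∞ (F(n,n-1) + G(n-1,n-1)) converge, and the limit L = lim_{n→∞} Σ_{k=0}^{n-1} F(n,k) exists. Then Σ_{n=0}^∞ G(n,0) = Σ_{n=1}^∞ (F(n,n-1) + G(n-1,n-1)) - L. -/

import Mathlib

theorem wz_acceleration (F G : ℕ → ℕ → ℝ)
    (hWZ : ∀ n k, F (n + 1) k - F n k = G n (k + 1) - G n k)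
    (S₁ S₂ L : ℝ)
    (h₁ : HasSum (fun n : ℕ => G n 0) S₁)
    (h₂ : HasSum (fun n : ℕ => F (n + 1) n + G n n) S₂)
    (hL : Filter.Tendsto (fun n : ℕ => ∑ k ∈ Finset.range n, F n k)
      Filter.atTop (nhds L)) :
    S₁ = S₂ - L := by
  have key : ∀ N : ℕ, ∑ n ∈ Finset.range N, G n 0
      = ∑ n ∈ Finset.range N, (F (n + 1) n + G n n) - ∑ k ∈ Finset.range N, F N k := by
    intro N
    induction N with
    | zero => simp
    | succ N ih =>
      have tel : ∑ k ∈ Finset.range N, (G N (k + 1) - G N k) = G N N - G N 0 :=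
        Finset.sum_range_sub (fun k => G N k) N
      have hstep : ∑ k ∈ Finset.range (N + 1), F (N + 1) k
          = ∑ k ∈ Finset.range N, F N k + F (N + 1) N + (G N N - G N 0) := by
        rw [Finset.sum_range_succ]
        have : ∑ k ∈ Finset.range N, F (N + 1) k
            = ∑ k ∈ Finset.range N, (F N k + (G N (k + 1) - G N k)) := by
          apply Finset.sum_congr rfl
          intro k _
          have := hWZ N k
          linarith
        rw [this, Finset.sum_add_distrib, tel]
        ring
      rw [Finset.sum_range_succ, Finset.sum_range_succ, ih, hstep]
      ring
  have hS₁ := h₁.tendsto_sum_nat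
  have hS₂ := h₂.tendsto_sum_nat
  have : Filter.Tendsto (fun N : ℕ => ∑ n ∈ Finset.range N, G n 0)
      Filter.atTop (nhds (S₂ - L)) := by
    have := hS₂.sub hL
    apply this.congr
    intro N
    exact (key N).symm
  exact tendsto_nhds_unique hS₁ this
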